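/- arXiv:2007.04261 — 2 statements merged into one kernel-verified Lean document; each statement's English description precedes it below -/
import Mathlib

section
/- Let d, n be natural numbers with d ≥ 2 and n ≥ 1. Let V be a finite set with |V| = n and let 𝓕 be a family of subsets of V satisfying d·|𝓕| ≤ n·(2^d − 2). Then there exists a vertex x ∈ V such that |𝓕_x| ≥ |𝓕| − (2^{d−1} − 2). -/
/-- The trace of a family `𝓕` at a vertex `x`: the family `{F \ {x} : F ∈ 𝓕}`. -/
def traceAt {α : Type*} [DecidableEq α] (𝓕 : Finset (Finset α)) (x : α) :
    Finset (Finset α) :=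
  𝓕.image fun F => F.erase x

set_option linter.unusedSectionVars false
set_option linter.unusedTactic false

open Finset

/-- Pointwise colex-profile lower bound function: `cc z m` is the value of
`∑ G z^|G|` for the colex-initial downset with `m` sets. -/
noncomputable def cc (z : ℝ) : ℕ → ℝ
  | 0 => 0
  | (n+1) => (1+z)^(Nat.log 2 (n+1)) + z * cc z (n+1 - 2^(Nat.log 2 (n+1)))
  decreasing_by
    exact Nat.sub_lt (Nat.succ_pos n) (Nat.pow_pos (by norm_num))

lemma cc_zero (z : ℝ) : cc z 0 = 0 := by rw [cc]

lemma cc_eq (z : ℝ) {m : ℕ} (hm : m ≠ 0) :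
    cc z m = (1+z)^(Nat.log 2 m) + z * cc z (m - 2^(Nat.log 2 m)) := by
  rcases Nat.exists_eq_succ_of_ne_zero hm with ⟨n, rfl⟩
  rw [cc]

lemma log2_eq {q m : ℕ} (h1 : 2^q ≤ m) (h2 : m < 2^(q+1)) : Nat.log 2 m = q :=
  Nat.log_eq_of_pow_le_of_lt_pow h1 h2

section zfacts
variable {z : ℝ} (hz0 : 0 ≤ z) (hz1 : z ≤ 1)

include hz0 in
lemma cc_nonneg : ∀ m, 0 ≤ cc z m := by
  intro m
  induction m using Nat.strong_induction_on with
  | _ m ih =>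
    rcases Nat.eq_zero_or_pos m with rfl | hm
    · simp [cc_zero]
    · rw [cc_eq z hm.ne']
      have h1 : 0 < 2 ^ Nat.log 2 m := Nat.pow_pos (by norm_num)
      have := ih (m - 2^(Nat.log 2 m)) (Nat.sub_lt hm h1)
      have h2 : (0:ℝ) ≤ (1+z) ^ Nat.log 2 m := by positivity
      nlinarith

include hz0 in
lemma cc_le_pow : ∀ m k, m ≤ 2^k → cc z m ≤ (1+z)^k := by
  intro m
  induction m using Nat.strong_induction_on with
  | _ m ih =>
    intro k hmk
    rcases Nat.eq_zero_or_pos m with rfl | hm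
    · rw [cc_zero]; positivity
    rw [cc_eq z hm.ne']
    set q := Nat.log 2 m with hq
    have hql : 2^q ≤ m := Nat.pow_log_le_self 2 hm.ne'
    have hqu : m < 2^(q+1) := Nat.lt_pow_succ_log_self (by norm_num) m
    rcases eq_or_lt_of_le hmk with heq | hlt
    · -- m = 2^k, so q = k and the remainder is 0
      subst heq
      have hqk : q = k := log2_eq le_rfl (by omega)
      rw [hqk, Nat.sub_self, cc_zero]
      simp
    · have hqk : q + 1 ≤ k := by
        have : q < k := by
          have := Nat.log_lt_of_lt_pow hm.ne' hlt
          omega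
        omega
      have hsub : m - 2^q ≤ 2^q := by omega
      have h2 : cc z (m - 2^q) ≤ (1+z)^q :=
        ih _ (Nat.sub_lt hm (Nat.pow_pos (by norm_num))) q hsub
      have hb : (1:ℝ) ≤ 1 + z := by linarith
      calc (1+z)^q + z * cc z (m - 2^q) ≤ (1+z)^q + z * (1+z)^q := by nlinarith
        _ = (1+z)^(q+1) := by ring
        _ ≤ (1+z)^k := pow_le_pow_right₀ hb hqk

lemma cc_two_pow_sub_one (z : ℝ) : ∀ k, cc z (2^k - 1) = (1+z)^k - z^k := by
  intro k
  induction k with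
  | zero => simp [cc_zero]
  | succ k ih =>
    have h1 : (1:ℕ) ≤ 2^k := Nat.one_le_two_pow
    have h2 : 2^(k+1) = 2^k + 2^k := by ring
    have hm : (2:ℕ)^(k+1) - 1 ≠ 0 := by omega
    rw [cc_eq z hm]
    have hlog : Nat.log 2 (2^(k+1) - 1) = k := log2_eq (by omega) (by omega)
    rw [hlog]
    have : 2^(k+1) - 1 - 2^k = 2^k - 1 := by omega
    rw [this, ih]
    ring

include hz0 hz1 in
lemma cc_succ_le : ∀ m, cc z m ≤ cc z (m+1) := by
  intro m
  induction m using Nat.strong_induction_on with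
  | _ m ih =>
    rcases Nat.eq_zero_or_pos m with rfl | hm
    · rw [cc_zero, cc_eq z (by norm_num : (1:ℕ) ≠ 0)]
      norm_num [cc_zero]
    set q := Nat.log 2 m with hq
    have hql : 2^q ≤ m := Nat.pow_log_le_self 2 hm.ne'
    have hqu : m < 2^(q+1) := Nat.lt_pow_succ_log_self (by norm_num) m
    rcases eq_or_lt_of_le (show m + 1 ≤ 2^(q+1) by omega) with heq | hlt
    · -- m = 2^(q+1) - 1
      have hm' : m = 2^(q+1) - 1 := by omega
      have e1 : cc z m = (1+z)^(q+1) - z^(q+1) := by rw [hm', cc_two_pow_sub_one]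
      have e2 : cc z (m+1) = (1+z)^(q+1) := by
        rw [cc_eq z (Nat.succ_ne_zero m)]
        have hlog : Nat.log 2 (m+1) = q+1 := log2_eq (by omega) (by omega)
        rw [hlog]
        have : m + 1 - 2^(q+1) = 0 := by omega
        rw [this, cc_zero]; ring
      rw [e1, e2]
      have : (0:ℝ) ≤ z^(q+1) := by positivity
      linarith
    · have hlog : Nat.log 2 (m+1) = q := log2_eq (by omega) hlt
      rw [cc_eq z hm.ne', cc_eq z (Nat.succ_ne_zero m), hlog, ← hq]
      have e : m + 1 - 2^q = (m - 2^q) + 1 := by omega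
      rw [e]
      have := ih (m - 2^q) (Nat.sub_lt hm (Nat.pow_pos (by norm_num)))
      nlinarith

include hz0 hz1 in
lemma cc_mono {m m' : ℕ} (h : m ≤ m') : cc z m ≤ cc z m' := by
  induction m', h using Nat.le_induction with
  | base => exact le_rfl
  | succ k hk ih => exact le_trans ih (cc_succ_le hz0 hz1 k)

end zfacts
section zfacts2
variable {z : ℝ} (hz0 : 0 ≤ z) (hz1 : z ≤ 1)

private lemma zmul_le {A B : ℝ} (hz0 : 0 ≤ z) (h : A ≤ B) : z*A ≤ z*B :=
  mul_le_mul_of_nonneg_left h hz0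

private lemma zmul_add_le {A B C D : ℝ} (hz0 : 0 ≤ z) (h : A + B ≤ C + D) :
    z*A + z*B ≤ z*C + z*D := by
  calc z*A + z*B = z*(A+B) := by ring
    _ ≤ z*(C+D) := mul_le_mul_of_nonneg_left h hz0
    _ = z*C + z*D := by ring

private lemma sub_zmul_le {A B : ℝ} (hz1 : z ≤ 1) (h : A ≤ B) : A - z*A ≤ B - z*B := by
  nlinarith [mul_nonneg (sub_nonneg.2 hz1) (sub_nonneg.2 h)]

include hz0 hz1 in
lemma cc_M_aux : ∀ n : ℕ,
    (∀ u v : ℕ, u + v = n → cc z n ≤ cc z u + cc z v) ∧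
    (∀ k u v : ℕ, u + v = n → 1 ≤ u → 1 ≤ v → 2^k ≤ n → u < 2^k → v < 2^k →
      (1+z)^k + cc z (n - 2^k) ≤ cc z u + cc z v) := by
  intro n
  induction n using Nat.strong_induction_on with
  | _ n ih =>
    have hMp_le : ∀ k u v : ℕ, u + v = n → 1 ≤ u → 1 ≤ v → u ≤ v → 2^k ≤ n → u < 2^k →
        v < 2^k → (1+z)^k + cc z (n - 2^k) ≤ cc z u + cc z v := by
      intro k u v huv hu1 hv1 hle hkn hu hv
      have hk : 0 < k := by
        rcases Nat.eq_zero_or_pos k with rfl | hk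
        · norm_num at hu; omega
        · exact hk
      obtain ⟨K, rfl⟩ : ∃ K, k = K + 1 := ⟨k - 1, by omega⟩
      have hP : (0:ℕ) < 2^K := Nat.pow_pos (by norm_num)
      have h2K : (2:ℕ)^(K+1) = 2^K + 2^K := by ring
      have hvK : 2^K ≤ v := by omega
      have hlogv : Nat.log 2 v = K := log2_eq hvK (by omega)
      have ev : cc z v = (1+z)^K + z * cc z (v - 2^K) := by
        rw [cc_eq z (by omega : v ≠ 0), hlogv]
      have hv'lt : v - 2^K < 2^K := by omega
      have epow : ((1:ℝ)+z)^(K+1) = (1+z)^K + z*(1+z)^K := by ring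
      have hpnn : (0:ℝ) ≤ (1+z)^K := by positivity
      by_cases huK : 2^K ≤ u
      · have hlogu : Nat.log 2 u = K := log2_eq huK (by omega)
        have eu : cc z u = (1+z)^K + z * cc z (u - 2^K) := by
          rw [cc_eq z (by omega : u ≠ 0), hlogu]
        have hu'lt : u - 2^K < 2^K := by omega
        have hs : (u - 2^K) + (v - 2^K) = n - 2^(K+1) := by omega
        have hcu : 0 ≤ cc z (u - 2^K) := cc_nonneg hz0 _
        have hcv : 0 ≤ cc z (v - 2^K) := cc_nonneg hz0 _
        rcases Nat.eq_zero_or_pos (n - 2^(K+1)) with hs0 | hs1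
        · rw [eu, ev, hs0, cc_zero]
          have hzz : z*(1+z)^K ≤ 1*(1+z)^K := mul_le_mul_of_nonneg_right hz1 hpnn
          rw [one_mul] at hzz
          have h1 : 0 ≤ z * cc z (u - 2^K) := mul_nonneg hz0 hcu
          have h2 : 0 ≤ z * cc z (v - 2^K) := mul_nonneg hz0 hcv
          linarith [epow]
        · by_cases hsK : 2^K ≤ n - 2^(K+1)
          · have hu'1 : 1 ≤ u - 2^K := by omega
            have hv'1 : 1 ≤ v - 2^K := by omega
            have hsn : n - 2^(K+1) < n := by omega
            have hMp_s := (ih _ hsn).2 K (u - 2^K) (v - 2^K) hs hu'1 hv'1 hsK hu'lt hv'lt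
            have hlogs : Nat.log 2 (n - 2^(K+1)) = K := log2_eq hsK (by omega)
            have es : cc z (n - 2^(K+1)) = (1+z)^K + z * cc z ((n - 2^(K+1)) - 2^K) := by
              rw [cc_eq z (by omega), hlogs]
            have hmul := zmul_add_le hz0 hMp_s
            rw [eu, ev, es]
            linarith [hmul, epow]
          · have hM_s := (ih _ (by omega : n - 2^(K+1) < n)).1 (u - 2^K) (v - 2^K) hs
            have hup : cc z (n - 2^(K+1)) ≤ (1+z)^K := cc_le_pow hz0 _ K (by omega)
            have hmulA : z * cc z (n - 2^(K+1)) ≤ z * cc z (u-2^K) + z * cc z (v-2^K) := by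
              calc z * cc z (n - 2^(K+1)) ≤ z * (cc z (u-2^K) + cc z (v-2^K)) :=
                    zmul_le hz0 hM_s
                _ = z * cc z (u-2^K) + z * cc z (v-2^K) := by ring
            have hmulB := sub_zmul_le hz1 hup
            rw [eu, ev]
            linarith [hmulA, hmulB, epow]
      · have hv'1 : 1 ≤ v - 2^K := by omega
        have hw : 2^K ≤ u + (v - 2^K) := by omega
        have hwlt : u + (v - 2^K) < n := by omega
        have hMp_w := (ih _ hwlt).2 K u (v - 2^K) rfl hu1 hv'1 hw (by omega) hv'lt
        have hsub : u + (v - 2^K) - 2^K = n - 2^(K+1) := by omega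
        rw [hsub] at hMp_w
        have hup : cc z (v - 2^K) ≤ (1+z)^K := cc_le_pow hz0 _ K (by omega)
        have hmulB := sub_zmul_le hz1 hup
        rw [ev]
        linarith [hMp_w, hmulB, epow]
    have hMp : ∀ k u v : ℕ, u + v = n → 1 ≤ u → 1 ≤ v → 2^k ≤ n → u < 2^k → v < 2^k →
        (1+z)^k + cc z (n - 2^k) ≤ cc z u + cc z v := by
      intro k u v huv hu hv hkn hult hvlt
      rcases le_total u v with h | h
      · exact hMp_le k u v huv hu hv h hkn hult hvlt
      · have := hMp_le k v u (by omega) hv hu h hkn hvlt hult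
        linarith
    refine ⟨?_, hMp⟩
    intro u v huv
    rcases Nat.eq_zero_or_pos u with rfl | hu1
    · have hv : v = n := by omega
      subst hv
      rw [cc_zero]
      linarith [le_refl (cc z v)]
    rcases Nat.eq_zero_or_pos v with rfl | hv1
    · have hu : u = n := by omega
      subst hu
      rw [cc_zero]
      linarith [le_refl (cc z u)]
    have hn1 : (1:ℕ) ≤ n := by omega
    set q := Nat.log 2 n with hqdef
    have hP : (0:ℕ) < 2^q := Nat.pow_pos (by norm_num)
    have hql : 2^q ≤ n := Nat.pow_log_le_self 2 (by omega)
    have hqu : n < 2^(q+1) := Nat.lt_pow_succ_log_self (by norm_num) n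
    have en : cc z n = (1+z)^q + z * cc z (n - 2^q) := by
      rw [cc_eq z (by omega : n ≠ 0), ← hqdef]
    by_cases hcase : u < 2^q ∧ v < 2^q
    · have hmp := hMp q u v huv hu1 hv1 hql hcase.1 hcase.2
      have h0 : 0 ≤ cc z (n - 2^q) := cc_nonneg hz0 _
      have h1 : z * cc z (n - 2^q) ≤ cc z (n - 2^q) := by
        nlinarith
      rw [en]
      linarith [hmp]
    · have key : ∀ a b : ℕ, a + b = n → 2^q ≤ b → cc z n ≤ cc z a + cc z b := by
        intro a b hab hbq
        have hlogb : Nat.log 2 b = q := log2_eq hbq (by omega)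
        have eb : cc z b = (1+z)^q + z * cc z (b - 2^q) := by
          rw [cc_eq z (by omega : b ≠ 0), hlogb]
        have hM := (ih (n - 2^q) (by omega)).1 a (b - 2^q) (by omega)
        have h1 : z * cc z (n - 2^q) ≤ z * cc z a + z * cc z (b - 2^q) := by
          calc z * cc z (n - 2^q) ≤ z * (cc z a + cc z (b - 2^q)) := zmul_le hz0 hM
            _ = z * cc z a + z * cc z (b - 2^q) := by ring
        have h2 : z * cc z a ≤ cc z a := by
          nlinarith [cc_nonneg hz0 a]
        rw [en, eb]
        linarith [h1, h2]
      rcases not_and_or.mp hcase with h | h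
      · push_neg at h
        have := key v u (by omega) h
        linarith
      · push_neg at h
        exact key u v huv h

include hz0 hz1 in
lemma cc_M {u v : ℕ} : cc z (u + v) ≤ cc z u + cc z v :=
  (cc_M_aux hz0 hz1 (u+v)).1 u v rfl

include hz0 hz1 in
lemma cc_N : ∀ n a b : ℕ, a + b = n → b ≤ a → cc z n ≤ cc z a + z * cc z b := by
  intro n
  induction n using Nat.strong_induction_on with
  | _ n ih =>
    intro a b hab hba
    rcases Nat.eq_zero_or_pos b with rfl | hb1
    · have ha : a = n := by omega
      subst ha
      rw [cc_zero]
      simp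
    have ha1 : 1 ≤ a := by omega
    have hn2 : 2 ≤ n := by omega
    set q := Nat.log 2 n with hqdef
    have hP : (0:ℕ) < 2^q := Nat.pow_pos (by norm_num)
    have hql : 2^q ≤ n := Nat.pow_log_le_self 2 (by omega)
    have hqu : n < 2^(q+1) := Nat.lt_pow_succ_log_self (by norm_num) n
    have h2q : (2:ℕ)^(q+1) = 2^q + 2^q := by ring
    have en : cc z n = (1+z)^q + z * cc z (n - 2^q) := by
      rw [cc_eq z (by omega : n ≠ 0), ← hqdef]
    by_cases haq : 2^q ≤ a
    · have hloga : Nat.log 2 a = q := log2_eq haq (by omega)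
      have ea : cc z a = (1+z)^q + z * cc z (a - 2^q) := by
        rw [cc_eq z (by omega : a ≠ 0), hloga]
      have hM : cc z (n - 2^q) ≤ cc z (a - 2^q) + cc z b := by
        have he : (a - 2^q) + b = n - 2^q := by omega
        rw [← he]
        exact cc_M hz0 hz1
      have h1 : z * cc z (n - 2^q) ≤ z * cc z (a - 2^q) + z * cc z b := by
        calc z * cc z (n - 2^q) ≤ z * (cc z (a - 2^q) + cc z b) := zmul_le hz0 hM
          _ = z * cc z (a - 2^q) + z * cc z b := by ring
      rw [en, ea]
      linarith [h1]
    · have hq1 : 1 ≤ q := by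
        by_contra hq0
        have : q = 0 := by omega
        rw [this] at hql hqu
        norm_num at hql hqu
        omega
      obtain ⟨K, hKq⟩ : ∃ K, q = K + 1 := ⟨q - 1, by omega⟩
      rw [hKq] at hql hqu en haq h2q
      have hPK : (0:ℕ) < 2^K := Nat.pow_pos (by norm_num)
      have h2K : (2:ℕ)^(K+1) = 2^K + 2^K := by ring
      have haK : 2^K ≤ a := by omega
      have halt : a < 2^(K+1) := by omega
      have hloga : Nat.log 2 a = K := log2_eq haK halt
      have ea : cc z a = (1+z)^K + z * cc z (a - 2^K) := by
        rw [cc_eq z (by omega : a ≠ 0), hloga]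
      have epow : ((1:ℝ)+z)^(K+1) = (1+z)^K + z*(1+z)^K := by ring
      by_cases hbK : 2^K ≤ b
      · have hlogb : Nat.log 2 b = K := log2_eq hbK (by omega)
        have eb : cc z b = (1+z)^K + z * cc z (b - 2^K) := by
          rw [cc_eq z (by omega : b ≠ 0), hlogb]
        have hNih : cc z ((a - 2^K) + (b - 2^K)) ≤ cc z (a - 2^K) + z * cc z (b - 2^K) :=
          ih _ (by omega) _ _ rfl (by omega)
        have hsub : (a - 2^K) + (b - 2^K) = n - 2^(K+1) := by omega
        rw [hsub] at hNih
        have h1 : z * cc z (n - 2^(K+1)) ≤ z * cc z (a - 2^K) + z * (z * cc z (b - 2^K)) := by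
          calc z * cc z (n - 2^(K+1)) ≤ z * (cc z (a - 2^K) + z * cc z (b - 2^K)) :=
                zmul_le hz0 hNih
            _ = z * cc z (a - 2^K) + z * (z * cc z (b - 2^K)) := by ring
        rw [en, ea, eb]
        have e2 : z * ((1+z)^K + z * cc z (b - 2^K))
            = z * (1+z)^K + z * (z * cc z (b - 2^K)) := by ring
        rw [e2]
        linarith [h1, epow]
      · have ha'1 : 1 ≤ a - 2^K := by omega
        have hw : 2^K ≤ (a - 2^K) + b := by omega
        have hwlt : (a - 2^K) + b < n := by omega
        have hMp := (cc_M_aux hz0 hz1 ((a - 2^K) + b)).2 K (a - 2^K) b rfl ha'1 hb1 hw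
          (by omega) (by omega)
        have hsub : (a - 2^K) + b - 2^K = n - 2^(K+1) := by omega
        rw [hsub] at hMp
        have h1 : z * ((1+z)^K + cc z (n - 2^(K+1))) ≤ z * (cc z (a - 2^K) + cc z b) :=
          zmul_le hz0 hMp
        have e1 : z * ((1+z)^K + cc z (n - 2^(K+1)))
            = z*(1+z)^K + z * cc z (n - 2^(K+1)) := by ring
        have e2 : z * (cc z (a - 2^K) + cc z b)
            = z * cc z (a - 2^K) + z * cc z b := by ring
        rw [e1, e2] at h1
        rw [en, ea]
        linarith [h1, epow]

include hz0 hz1 in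
lemma cc_N' {a b : ℕ} (h : b ≤ a) : cc z (a + b) ≤ cc z a + z * cc z b :=
  cc_N hz0 hz1 (a+b) a b rfl h

end zfacts2
section family
variable {α : Type*} [DecidableEq α]

/-- A family of finsets closed under erasing any element. -/
def IsDownset (𝓛 : Finset (Finset α)) : Prop := ∀ F ∈ 𝓛, ∀ x, F.erase x ∈ 𝓛

lemma IsDownset.nonMember {𝓛 : Finset (Finset α)} (h : IsDownset 𝓛) (x : α) :
    IsDownset (𝓛.nonMemberSubfamily x) := by
  intro F hF y
  rw [Finset.mem_nonMemberSubfamily] at hF ⊢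
  exact ⟨h F hF.1 y, fun hx => hF.2 (Finset.mem_of_mem_erase hx)⟩

lemma IsDownset.member {𝓛 : Finset (Finset α)} (h : IsDownset 𝓛) (x : α) :
    IsDownset (𝓛.memberSubfamily x) := by
  intro F hF y
  rw [Finset.mem_memberSubfamily] at hF ⊢
  refine ⟨?_, fun hy => hF.2 (Finset.mem_of_mem_erase hy)⟩
  rcases eq_or_ne x y with rfl | hxy
  · rw [Finset.erase_eq_of_notMem hF.2]
    exact hF.1
  · rw [← Finset.erase_insert_of_ne hxy]
    exact h _ hF.1 y

lemma IsDownset.member_subset_nonMember {𝓛 : Finset (Finset α)} (h : IsDownset 𝓛) (x : α) :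
    𝓛.memberSubfamily x ⊆ 𝓛.nonMemberSubfamily x := by
  intro F hF
  rw [Finset.mem_memberSubfamily] at hF
  rw [Finset.mem_nonMemberSubfamily]
  refine ⟨?_, hF.2⟩
  have := h _ hF.1 x
  rwa [Finset.erase_insert hF.2] at this

lemma IsDownset.empty_mem {𝓛 : Finset (Finset α)} (h : IsDownset 𝓛) {F : Finset α}
    (hF : F ∈ 𝓛) : ∅ ∈ 𝓛 := by
  induction F using Finset.strongInduction with
  | _ F ih =>
    rcases Finset.eq_empty_or_nonempty F with rfl | ⟨x, hx⟩
    · exact hF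
    · exact ih (F.erase x) (Finset.erase_ssubset hx) (h F hF x)

/-- The profile polynomial of a family, evaluated at `z`. -/
noncomputable def pz (z : ℝ) (𝓛 : Finset (Finset α)) : ℝ := ∑ G ∈ 𝓛, z ^ G.card

lemma pz_split (z : ℝ) (𝓛 : Finset (Finset α)) (x : α) :
    pz z 𝓛 = pz z (𝓛.nonMemberSubfamily x) + z * pz z (𝓛.memberSubfamily x) := by
  unfold pz
  have hsplit : ∑ G ∈ 𝓛, z ^ G.card
      = ∑ G ∈ 𝓛.filter (fun G => x ∈ G), z ^ G.card
        + ∑ G ∈ 𝓛.filter (fun G => x ∉ G), z ^ G.card :=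
    (Finset.sum_filter_add_sum_filter_not 𝓛 _ _).symm
  have h1 : (𝓛.nonMemberSubfamily x) = 𝓛.filter (fun G => x ∉ G) := rfl
  have h2 : ∑ G ∈ 𝓛.memberSubfamily x, z ^ G.card
      = ∑ G ∈ 𝓛.filter (fun G => x ∈ G), z ^ (G.erase x).card := by
    unfold Finset.memberSubfamily
    refine Finset.sum_image ?_
    intro F hF G hG hFG
    rw [Finset.mem_coe, Finset.mem_filter] at hF hG
    beta_reduce at hFG
    rw [← Finset.insert_erase hF.2, hFG, Finset.insert_erase hG.2]
  have h3 : ∑ G ∈ 𝓛.filter (fun G => x ∈ G), z ^ G.card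
      = z * ∑ G ∈ 𝓛.filter (fun G => x ∈ G), z ^ (G.erase x).card := by
    rw [Finset.mul_sum]
    refine Finset.sum_congr rfl ?_
    intro G hG
    rw [Finset.mem_filter] at hG
    rw [← Finset.card_erase_add_one hG.2, pow_succ]
    ring
  rw [hsplit, h1, h2, h3]
  ring

/-- Main pointwise bound: any downset's profile dominates the colex profile `cc`. -/
lemma cc_le_pz {z : ℝ} (hz0 : 0 ≤ z) (hz1 : z ≤ 1) (𝓛 : Finset (Finset α))
    (h : IsDownset 𝓛) : cc z 𝓛.card ≤ pz z 𝓛 := by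
  revert h
  induction 𝓛 using Finset.memberFamily_induction_on with
  | empty => intro _; simp [pz, cc_zero]
  | singleton_empty =>
      intro _
      have : ({∅} : Finset (Finset α)).card = 1 := rfl
      rw [this, cc_eq z one_ne_zero]
      simp [pz, cc_zero]
  | @subfamily a 𝓛 ih0 ih1 =>
    intro h
    have hds0 : IsDownset (𝓛.nonMemberSubfamily a) := h.nonMember a
    have hds1 : IsDownset (𝓛.memberSubfamily a) := h.member a
    have hsub := h.member_subset_nonMember a
    have hcards := Finset.card_memberSubfamily_add_card_nonMemberSubfamily a 𝓛
    have hble : (𝓛.memberSubfamily a).card ≤ (𝓛.nonMemberSubfamily a).card :=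
      Finset.card_le_card hsub
    have hN : cc z 𝓛.card ≤ cc z (𝓛.nonMemberSubfamily a).card
        + z * cc z (𝓛.memberSubfamily a).card := by
      have := cc_N' hz0 hz1 hble
      rwa [show (𝓛.nonMemberSubfamily a).card + (𝓛.memberSubfamily a).card = 𝓛.card by omega]
        at this
    have hz1' : z * cc z (𝓛.memberSubfamily a).card ≤ z * pz z (𝓛.memberSubfamily a) :=
      mul_le_mul_of_nonneg_left (ih1 hds1) hz0
    rw [pz_split z 𝓛 a]
    linarith [ih0 hds0, hz1']

end family
section harmonic
variable {α : Type*} [DecidableEq α]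

open MeasureTheory intervalIntegral

lemma harmonic_ge (k : ℕ) (𝓛 : Finset (Finset α)) (h : IsDownset 𝓛)
    (hcard : 2^k - 1 ≤ 𝓛.card) :
    ((2:ℝ)^(k+1) - 2) / ((k:ℝ)+1) ≤ ∑ G ∈ 𝓛, ((G.card : ℝ) + 1)⁻¹ := by
  have hPc : Continuous (fun t : ℝ => pz t 𝓛) := by
    unfold pz
    exact continuous_finset_sum _ fun i _ => continuous_pow _
  have hg1c : Continuous (fun t : ℝ => (1+t)^k) := by
    have : Continuous (fun t : ℝ => 1 + t) := continuous_const.add continuous_id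
    exact this.pow k
  have hgc : Continuous (fun t : ℝ => (1+t)^k - t^k) := hg1c.sub (continuous_pow k)
  have hP_int : IntervalIntegrable (fun t : ℝ => pz t 𝓛) volume 0 1 :=
    hPc.intervalIntegrable 0 1
  have hg_int : IntervalIntegrable (fun t : ℝ => (1+t)^k - t^k) volume 0 1 :=
    hgc.intervalIntegrable 0 1
  have hpoint : ∀ t ∈ Set.Icc (0:ℝ) 1, (1+t)^k - t^k ≤ pz t 𝓛 := by
    intro t ht
    have h1 : cc t (2^k - 1) = (1+t)^k - t^k := cc_two_pow_sub_one t k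
    have h2 : cc t (2^k - 1) ≤ cc t 𝓛.card := cc_mono ht.1 ht.2 hcard
    have h3 : cc t 𝓛.card ≤ pz t 𝓛 := cc_le_pz ht.1 ht.2 𝓛 h
    linarith
  have hmono := intervalIntegral.integral_mono_on (by norm_num : (0:ℝ) ≤ 1)
    hg_int hP_int hpoint
  have eP : (∫ t in (0:ℝ)..1, pz t 𝓛) = ∑ G ∈ 𝓛, ((G.card : ℝ) + 1)⁻¹ := by
    have e1 : (∫ t in (0:ℝ)..1, pz t 𝓛)
        = ∑ G ∈ 𝓛, ∫ t in (0:ℝ)..1, t ^ G.card := by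
      unfold pz
      exact intervalIntegral.integral_finset_sum
        (fun G _ => (continuous_pow _).intervalIntegrable 0 1)
    rw [e1]
    refine Finset.sum_congr rfl fun G _ => ?_
    rw [integral_pow]
    norm_num
  have eg : (∫ t in (0:ℝ)..1, ((1+t)^k - t^k)) = ((2:ℝ)^(k+1) - 2) / ((k:ℝ)+1) := by
    rw [intervalIntegral.integral_sub (hg1c.intervalIntegrable 0 1)
      ((continuous_pow k).intervalIntegrable 0 1)]
    have ha : (∫ t in (0:ℝ)..1, (1+t)^k) = ((2:ℝ)^(k+1) - 1)/((k:ℝ)+1) := by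
      have hcomp := intervalIntegral.integral_comp_add_left (a := (0:ℝ)) (b := (1:ℝ))
        (fun u : ℝ => u^k) 1
      rw [hcomp, integral_pow]
      norm_num
    rw [ha, integral_pow]
    push_cast
    ring
  rw [eP] at hmono
  rw [eg] at hmono
  exact hmono

/-- Core counting bound: a downset on `V` where every vertex has degree at least
`2^(d-1) - 1` has at least `n (2^d-2)/d + 1` sets. -/
lemma downset_main (d n : ℕ) (hd : 2 ≤ d) (hn : 1 ≤ n)
    (V : Finset α) (hV : V.card = n) (𝓖 : Finset (Finset α)) (h𝓖 : 𝓖 ⊆ V.powerset)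
    (hds : IsDownset 𝓖)
    (hdeg : ∀ x ∈ V, 2^(d-1) - 1 ≤ (𝓖.filter (fun F => x ∈ F)).card) :
    (n : ℝ) * (((2:ℝ)^d - 2) / d) + 1 ≤ 𝓖.card := by
  -- the empty set belongs to 𝓖
  have hVne : V.Nonempty := Finset.card_pos.mp (by omega)
  obtain ⟨x0, hx0⟩ := hVne
  have hdeg0 : 1 ≤ (𝓖.filter (fun F => x0 ∈ F)).card := by
    have h1 : (2:ℕ) ≤ 2^(d-1) := by
      have : 1 ≤ d - 1 := by omega
      calc (2:ℕ) = 2^1 := rfl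
        _ ≤ 2^(d-1) := Nat.pow_le_pow_right (by norm_num) this
    have := hdeg x0 hx0
    omega
  obtain ⟨F0, hF0⟩ := Finset.card_pos.mp (by omega : 0 < (𝓖.filter (fun F => x0 ∈ F)).card)
  have hF0' : F0 ∈ 𝓖 := (Finset.mem_filter.mp hF0).1
  have hempty : ∅ ∈ 𝓖 := hds.empty_mem hF0'
  -- per-vertex lower bound for link sums
  have hlink : ∀ x ∈ V, ((2:ℝ)^d - 2) / d
      ≤ ∑ F ∈ 𝓖.filter (fun F => x ∈ F), ((F.card : ℝ))⁻¹ := by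
    intro x hx
    have hdsx : IsDownset (𝓖.memberSubfamily x) := hds.member x
    have hcardx : (𝓖.memberSubfamily x).card = (𝓖.filter (fun F => x ∈ F)).card := by
      have h1 := Finset.card_memberSubfamily_add_card_nonMemberSubfamily x 𝓖
      have h2 : (𝓖.filter (fun F => x ∈ F)).card + (𝓖.filter (fun F => ¬ x ∈ F)).card
          = 𝓖.card := Finset.card_filter_add_card_filter_not _
      have h3 : (𝓖.nonMemberSubfamily x) = 𝓖.filter (fun F => ¬ x ∈ F) := rfl
      rw [h3] at h1
      omega
    have hc : 2^(d-1) - 1 ≤ (𝓖.memberSubfamily x).card := by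
      rw [hcardx]; exact hdeg x hx
    have hhar := harmonic_ge (d-1) (𝓖.memberSubfamily x) hdsx hc
    have hsum_eq : ∑ G ∈ 𝓖.memberSubfamily x, ((G.card : ℝ) + 1)⁻¹
        = ∑ F ∈ 𝓖.filter (fun F => x ∈ F), ((F.card : ℝ))⁻¹ := by
      unfold Finset.memberSubfamily
      rw [Finset.sum_image]
      · refine Finset.sum_congr rfl fun F hF => ?_
        have hxF : x ∈ F := (Finset.mem_filter.mp hF).2
        have : (F.erase x).card + 1 = F.card := Finset.card_erase_add_one hxF
        rw [← this]
        push_cast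
        ring_nf
      · intro F hF G hG hFG
        rw [Finset.mem_coe, Finset.mem_filter] at hF hG
        beta_reduce at hFG
        rw [← Finset.insert_erase hF.2, hFG, Finset.insert_erase hG.2]
    have hde : ((d:ℕ) - 1) + 1 = d := by omega
    have hcast : ((d - 1 : ℕ) : ℝ) + 1 = (d : ℝ) := by
      rw [Nat.cast_sub (by omega : 1 ≤ d)]
      push_cast
      ring
    rw [hsum_eq, hde, hcast] at hhar
    exact hhar
  -- swap sums
  have hid : ∑ x ∈ V, ∑ F ∈ 𝓖.filter (fun F => x ∈ F), ((F.card : ℝ))⁻¹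
      = (𝓖.card : ℝ) - 1 := by
    calc ∑ x ∈ V, ∑ F ∈ 𝓖.filter (fun F => x ∈ F), ((F.card : ℝ))⁻¹
        = ∑ x ∈ V, ∑ F ∈ 𝓖, if x ∈ F then ((F.card : ℝ))⁻¹ else 0 := by
          refine Finset.sum_congr rfl fun x _ => ?_
          rw [Finset.sum_filter]
      _ = ∑ F ∈ 𝓖, ∑ x ∈ V, if x ∈ F then ((F.card : ℝ))⁻¹ else 0 := Finset.sum_comm
      _ = ∑ F ∈ 𝓖, (if F = ∅ then 0 else 1) := by
          refine Finset.sum_congr rfl fun F hF => ?_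
          have hFV : F ⊆ V := Finset.mem_powerset.mp (h𝓖 hF)
          rw [← Finset.sum_filter]
          have hfe : V.filter (fun x => x ∈ F) = F := by
            ext y
            simp only [Finset.mem_filter]
            exact ⟨fun hy => hy.2, fun hy => ⟨hFV hy, hy⟩⟩
          rw [hfe, Finset.sum_const, nsmul_eq_mul]
          rcases eq_or_ne F ∅ with rfl | hne
          · simp
          · rw [if_neg hne]
            have : (F.card : ℝ) ≠ 0 := by
              have := Finset.card_pos.mpr (Finset.nonempty_of_ne_empty hne)
              positivity
            field_simp
      _ = (𝓖.card : ℝ) - 1 := by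
          have e1 : ∀ F : Finset α, (if F = ∅ then (0:ℝ) else 1)
              = 1 - (if F = ∅ then (1:ℝ) else 0) := by
            intro F
            by_cases hF : F = ∅ <;> simp [hF]
          simp_rw [e1]
          rw [Finset.sum_sub_distrib, Finset.sum_const, nsmul_eq_mul, mul_one]
          have : ∑ F ∈ 𝓖, (if F = ∅ then (1:ℝ) else 0) = 1 := by
            rw [Finset.sum_ite_eq' 𝓖 ∅ (fun _ => (1:ℝ))]
            simp [hempty]
          rw [this]
  have hsumge : (n : ℝ) * (((2:ℝ)^d - 2) / d)
      ≤ ∑ x ∈ V, ∑ F ∈ 𝓖.filter (fun F => x ∈ F), ((F.card : ℝ))⁻¹ := by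
    have := Finset.sum_le_sum hlink
    rwa [Finset.sum_const, nsmul_eq_mul, hV] at this
  rw [hid] at hsumge
  linarith

end harmonic
section compressionred
variable {α : Type*} [DecidableEq α]

open FinsetFamily

lemma mem_traceAt {𝓕 : Finset (Finset α)} {y : α} {s : Finset α} :
    s ∈ traceAt 𝓕 y ↔ ∃ F ∈ 𝓕, F.erase y = s := by
  simp [traceAt]

lemma traceAt_compression_le (𝓕 : Finset (Finset α)) (x y : α) :
    (traceAt (Down.compression x 𝓕) y).card ≤ (traceAt 𝓕 y).card := by
  rcases eq_or_ne y x with rfl | hxy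
  · refine Finset.card_le_card ?_
    intro s hs
    rw [mem_traceAt] at hs ⊢
    obtain ⟨K, hK, rfl⟩ := hs
    rw [Down.mem_compression] at hK
    rcases hK with ⟨hK, -⟩ | ⟨-, hK⟩
    · exact ⟨K, hK, rfl⟩
    · exact ⟨insert y K, hK, Finset.erase_insert_eq_erase _ _⟩
  · have hsub : traceAt (Down.compression x 𝓕) y ⊆ Down.compression x (traceAt 𝓕 y) := by
      intro s hs
      rw [mem_traceAt] at hs
      obtain ⟨K, hK, rfl⟩ := hs
      rw [Down.mem_compression] at hK
      rw [Down.mem_compression]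
      rcases hK with ⟨hK, hKe⟩ | ⟨hKn, hins⟩
      · left
        constructor
        · exact mem_traceAt.mpr ⟨K, hK, rfl⟩
        · refine mem_traceAt.mpr ⟨K.erase x, hKe, ?_⟩
          exact Finset.erase_right_comm
      · have hxK : x ∉ K := fun hxK => hKn (by rwa [Finset.insert_eq_self.mpr hxK] at hins)
        by_cases hs : K.erase y ∈ traceAt 𝓕 y
        · left
          refine ⟨hs, ?_⟩
          have hxs : x ∉ K.erase y := fun h => hxK (Finset.mem_of_mem_erase h)
          rwa [Finset.erase_eq_of_notMem hxs]
        · right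
          refine ⟨hs, ?_⟩
          refine mem_traceAt.mpr ⟨insert x K, hins, ?_⟩
          exact Finset.erase_insert_of_ne (Ne.symm hxy)
    calc (traceAt (Down.compression x 𝓕) y).card
        ≤ (Down.compression x (traceAt 𝓕 y)).card := Finset.card_le_card hsub
      _ = (traceAt 𝓕 y).card := Down.card_compression x _

lemma compression_sum_lt {𝓕 : Finset (Finset α)} {F0 : Finset α} {x : α}
    (hF0 : F0 ∈ 𝓕) (hnx : F0.erase x ∉ 𝓕) :
    ∑ K ∈ Down.compression x 𝓕, K.card < ∑ F ∈ 𝓕, F.card := by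
  have hxF0 : x ∈ F0 := by
    by_contra hx
    exact hnx (by rwa [Finset.erase_eq_of_notMem hx])
  have hCx : ∀ F ∈ 𝓕.filter (fun s => ¬ s.erase x ∈ 𝓕), x ∈ F := by
    intro F hF
    rw [Finset.mem_filter] at hF
    by_contra hx
    exact hF.2 (by rw [Finset.erase_eq_of_notMem hx]; exact hF.1)
  have hinj : ∀ F ∈ 𝓕.filter (fun s => ¬ s.erase x ∈ 𝓕),
      ∀ G ∈ 𝓕.filter (fun s => ¬ s.erase x ∈ 𝓕), F.erase x = G.erase x → F = G := by
    intro F hF G hG hFG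
    rw [← Finset.insert_erase (hCx F hF), hFG, Finset.insert_erase (hCx G hG)]
  have hBeq : {s ∈ 𝓕.image fun s ↦ s.erase x | s ∉ 𝓕}
      = (𝓕.filter (fun s => ¬ s.erase x ∈ 𝓕)).image (fun s => s.erase x) := by
    ext s
    simp only [Finset.mem_filter, Finset.mem_image]
    constructor
    · rintro ⟨⟨F, hF, rfl⟩, hs⟩
      exact ⟨F, ⟨hF, hs⟩, rfl⟩
    · rintro ⟨F, ⟨hF, hFe⟩, rfl⟩
      exact ⟨⟨F, hF, rfl⟩, hFe⟩
  have hsum : ∑ K ∈ Down.compression x 𝓕, K.card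
      = ∑ K ∈ 𝓕.filter (fun s => s.erase x ∈ 𝓕), K.card
        + ∑ F ∈ 𝓕.filter (fun s => ¬ s.erase x ∈ 𝓕), (F.erase x).card := by
    rw [Down.compression, Finset.sum_disjUnion, hBeq, Finset.sum_image hinj]
  have hsplit : ∑ F ∈ 𝓕, F.card
      = ∑ K ∈ 𝓕.filter (fun s => s.erase x ∈ 𝓕), K.card
        + ∑ F ∈ 𝓕.filter (fun s => ¬ s.erase x ∈ 𝓕), F.card :=
    (Finset.sum_filter_add_sum_filter_not 𝓕 _ _).symm
  have hF0C : F0 ∈ 𝓕.filter (fun s => ¬ s.erase x ∈ 𝓕) := by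
    rw [Finset.mem_filter]
    exact ⟨hF0, hnx⟩
  have hlt : ∑ F ∈ 𝓕.filter (fun s => ¬ s.erase x ∈ 𝓕), (F.erase x).card
      < ∑ F ∈ 𝓕.filter (fun s => ¬ s.erase x ∈ 𝓕), F.card := by
    refine Finset.sum_lt_sum (fun F hF => Finset.card_le_card (Finset.erase_subset _ _)) ?_
    refine ⟨F0, hF0C, ?_⟩
    have := Finset.card_erase_add_one hxF0
    omega
  omega

lemma exists_downset (V : Finset α) : ∀ (N : ℕ) (𝓕 : Finset (Finset α)),
    (∑ F ∈ 𝓕, F.card) ≤ N → 𝓕 ⊆ V.powerset →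
    ∃ 𝓖, 𝓖 ⊆ V.powerset ∧ IsDownset 𝓖 ∧ 𝓖.card = 𝓕.card ∧
      ∀ y, (traceAt 𝓖 y).card ≤ (traceAt 𝓕 y).card := by
  intro N
  induction N with
  | zero =>
    intro 𝓕 hμ hpow
    refine ⟨𝓕, hpow, ?_, rfl, fun y => le_rfl⟩
    intro F hF x
    have hc : F.card = 0 := by
      have h1 : F.card ≤ ∑ G ∈ 𝓕, G.card := Finset.single_le_sum (fun _ _ => Nat.zero_le _) hF
      omega
    rw [Finset.card_eq_zero] at hc
    subst hc
    simpa using hF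
  | succ N ih =>
    intro 𝓕 hμ hpow
    by_cases hds : IsDownset 𝓕
    · exact ⟨𝓕, hpow, hds, rfl, fun y => le_rfl⟩
    · simp only [IsDownset, not_forall] at hds
      obtain ⟨F0, hF0, x, hnx⟩ := hds
      have hlt := compression_sum_lt hF0 hnx
      have hpow' : Down.compression x 𝓕 ⊆ V.powerset := by
        intro s hs
        rw [Down.mem_compression] at hs
        rcases hs with ⟨hs, -⟩ | ⟨-, hs⟩
        · exact hpow hs
        · have := hpow hs
          rw [Finset.mem_powerset] at this ⊢
          exact (Finset.subset_insert x s).trans this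
      obtain ⟨𝓖, h1, h2, h3, h4⟩ := ih (Down.compression x 𝓕) (by omega) hpow'
      refine ⟨𝓖, h1, h2, ?_, fun y => le_trans (h4 y) (traceAt_compression_le 𝓕 x y)⟩
      rw [h3, Down.card_compression]

end compressionred
section final
variable {α : Type*} [DecidableEq α]

lemma traceAt_downset_eq {𝓖 : Finset (Finset α)} (hds : IsDownset 𝓖) (x : α) :
    traceAt 𝓖 x = 𝓖.filter (fun F => x ∉ F) := by
  ext s
  rw [mem_traceAt, Finset.mem_filter]
  constructor
  · rintro ⟨F, hF, rfl⟩
    exact ⟨hds F hF x, Finset.notMem_erase x F⟩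
  · rintro ⟨hs, hxs⟩
    exact ⟨s, hs, Finset.erase_eq_of_notMem hxs⟩

lemma card_traceAt_downset {𝓖 : Finset (Finset α)} (hds : IsDownset 𝓖) (x : α) :
    (traceAt 𝓖 x).card + (𝓖.filter (fun F => x ∈ F)).card = 𝓖.card := by
  rw [traceAt_downset_eq hds x]
  have := Finset.card_filter_add_card_filter_not (s := 𝓖) (p := fun F => x ∈ F)
  omega

theorem trace_lower_c2' (d n : ℕ)
    (hd : 2 ≤ d) (hn : 1 ≤ n)
    (V : Finset α) (hV : V.card = n)
    (𝓕 : Finset (Finset α)) (h𝓕 : 𝓕 ⊆ V.powerset)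
    (hcount : (d : ℤ) * 𝓕.card ≤ (n : ℤ) * (2 ^ d - 2)) :
    ∃ x ∈ V, (𝓕.card : ℤ) - (2 ^ (d - 1) - 2) ≤ ((traceAt 𝓕 x).card : ℤ) := by
  by_contra hcon
  push_neg at hcon
  obtain ⟨𝓖, hpow, hds, hcard, htr⟩ := exists_downset V (∑ F ∈ 𝓕, F.card) 𝓕 le_rfl h𝓕
  have h2d : (2:ℕ) ≤ 2^(d-1) := by
    calc (2:ℕ) = 2^1 := rfl
      _ ≤ 2^(d-1) := Nat.pow_le_pow_right (by norm_num) (by omega)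
  have hcast : ((2^(d-1) : ℕ) : ℤ) = 2^(d-1) := by push_cast; ring
  have hdeg : ∀ x ∈ V, 2^(d-1) - 1 ≤ (𝓖.filter (fun F => x ∈ F)).card := by
    intro x hx
    by_contra hlow
    push_neg at hlow
    have hct := card_traceAt_downset hds x
    have h4 := htr x
    have h5 := hcon x hx
    omega
  have hmain := downset_main d n hd hn V hV 𝓖 hpow hds hdeg
  rw [hcard] at hmain
  have hcount' : (d:ℝ) * 𝓕.card ≤ (n:ℝ) * ((2:ℝ)^d - 2) := by
    exact_mod_cast hcount
  have hd0 : (0:ℝ) < d := by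
    have : (2:ℝ) ≤ d := by exact_mod_cast hd
    linarith
  have hmul := mul_le_mul_of_nonneg_left hmain (le_of_lt hd0)
  have e : (d:ℝ) * ((n:ℝ) * (((2:ℝ)^d - 2)/d) + 1) = (n:ℝ)*((2:ℝ)^d - 2) + d := by
    field_simp
  linarith

end final

/-- Lower-bound (arrowing) direction: if `d ≥ 2`, `n ≥ 1` and a family `𝓕` of subsets
of an `n`-set `V` has `d·|𝓕| ≤ n·(2^d − 2)`, then some vertex `x ∈ V` satisfies
`|𝓕_x| ≥ |𝓕| − (2^{d−1} − 2)`. -/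
theorem trace_lower_c2 {α : Type*} [DecidableEq α] (d n : ℕ)
    (hd : 2 ≤ d) (hn : 1 ≤ n)
    (V : Finset α) (hV : V.card = n)
    (𝓕 : Finset (Finset α)) (h𝓕 : 𝓕 ⊆ V.powerset)
    (hcount : (d : ℤ) * 𝓕.card ≤ (n : ℤ) * (2 ^ d - 2)) :
    ∃ x ∈ V, (𝓕.card : ℤ) - (2 ^ (d - 1) - 2) ≤ ((traceAt 𝓕 x).card : ℤ) :=
  trace_lower_c2' d n hd hn V hV 𝓕 h𝓕 hcount
end

section
/- Let d, c be natural numbers with d ≥ c + 1, let V be a finite set with |V| = d, and let 𝓗 be a hereditary family of subsets of V such that every vertex v ∈ V has degree at least 2^{d−1} − c in 𝓗. Then |𝓗| ≥ 2^d − c. -/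
/-- A family of finite sets is hereditary if it is closed under taking subsets. -/
def Hereditary {α : Type*} [DecidableEq α] (𝓕 : Finset (Finset α)) : Prop :=
  ∀ F ∈ 𝓕, ∀ F' ⊆ F, F' ∈ 𝓕

open Finset

/-- In an upward-closed nonempty family on `V` with all vertex degrees at most
`c ≤ |V| - 1`, there is a vertex common to all members. -/
lemma exists_common_vertex {α : Type*} [DecidableEq α] :
    ∀ n : ℕ, ∀ (V : Finset α) (M : Finset (Finset α)) (c : ℕ),
      V.card = n → c + 1 ≤ n → M ⊆ V.powerset →
      (∀ A ∈ M, ∀ B ∈ V.powerset, A ⊆ B → B ∈ M) → M.Nonempty →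
      (∀ v ∈ V, (M.filter (fun A => v ∈ A)).card ≤ c) →
      ∃ u ∈ V, ∀ A ∈ M, u ∈ A := by
  intro n
  induction n using Nat.strong_induction_on with
  | _ n ih =>
    intro V M c hVn hcn hMP hup hne hdeg
    by_contra hcon
    push_neg at hcon
    -- V itself belongs to M
    obtain ⟨A₀, hA₀⟩ := hne
    have hVM : V ∈ M := hup A₀ hA₀ V (mem_powerset.mpr Subset.rfl) (mem_powerset.mp (hMP hA₀))
    -- V is nonempty
    have hV0 : V.Nonempty := by
      rw [← card_pos, hVn]; omega
    obtain ⟨v, hv⟩ := hV0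
    -- c ≥ 1
    have hc1 : 1 ≤ c := by
      have h1 : 1 ≤ (M.filter (fun A => v ∈ A)).card :=
        card_pos.mpr ⟨V, mem_filter.mpr ⟨hVM, hv⟩⟩
      exact le_trans h1 (hdeg v hv)
    -- the link family
    set V' := V.erase v with hV'
    set M' := (M.filter (fun A => v ∈ A)).image (fun A => A.erase v) with hM'
    have hinj : Set.InjOn (fun A : Finset α => A.erase v)
        ↑(M.filter (fun A => v ∈ A)) := by
      intro A hA B hB hAB
      simp only [coe_filter, Set.mem_setOf_eq] at hA hB
      have h2 : insert v ((fun A => A.erase v) A) = insert v ((fun A => A.erase v) B) :=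
        congrArg (insert v) hAB
      simp only [insert_erase hA.2, insert_erase hB.2] at h2
      exact h2
    have hM'P : M' ⊆ V'.powerset := by
      intro B hB
      obtain ⟨A, hA, rfl⟩ := mem_image.mp hB
      have hAV : A ⊆ V := mem_powerset.mp (hMP (mem_filter.mp hA).1)
      exact mem_powerset.mpr (erase_subset_erase v hAV)
    have hM'ne : M'.Nonempty :=
      ⟨V.erase v, mem_image.mpr ⟨V, mem_filter.mpr ⟨hVM, hv⟩, rfl⟩⟩
    -- sets in M not containing v also appear in M'
    have hM0 : ∀ A ∈ M, v ∉ A → A ∈ M' := by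
      intro A hA hvA
      have hAV : A ⊆ V := mem_powerset.mp (hMP hA)
      have hiv : insert v A ∈ M := by
        refine hup A hA (insert v A) (mem_powerset.mpr ?_) (subset_insert _ _)
        exact insert_subset hv hAV
      refine mem_image.mpr ⟨insert v A, mem_filter.mpr ⟨hiv, mem_insert_self _ _⟩, ?_⟩
      simp [erase_insert hvA]
    -- M' is upward closed in V'
    have hup' : ∀ A' ∈ M', ∀ B ∈ V'.powerset, A' ⊆ B → B ∈ M' := by
      intro A' hA' B hBP hAB
      obtain ⟨A, hA, rfl⟩ := mem_image.mp hA'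
      obtain ⟨hAM, hvA⟩ := mem_filter.mp hA
      have hBV' : B ⊆ V' := mem_powerset.mp hBP
      have hvB : v ∉ B := fun h => (notMem_erase v V) (hBV' h)
      have hsub : A ⊆ insert v B := by
        intro a ha
        rcases eq_or_ne a v with rfl | hav
        · exact mem_insert_self _ _
        · exact mem_insert_of_mem (hAB (mem_erase.mpr ⟨hav, ha⟩))
      have hivB : insert v B ∈ M := by
        refine hup A hAM (insert v B) (mem_powerset.mpr ?_) hsub
        exact insert_subset hv (hBV'.trans (erase_subset v V))
      refine mem_image.mpr ⟨insert v B, mem_filter.mpr ⟨hivB, mem_insert_self _ _⟩, ?_⟩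
      simp [erase_insert hvB]
    -- degree bound in M'
    have hdeg' : ∀ u ∈ V', (M'.filter (fun A => u ∈ A)).card ≤ c - 1 := by
      intro u hu
      obtain ⟨huv, huV⟩ := mem_erase.mp hu
      -- identify the filtered set as an image
      have himg : M'.filter (fun A => u ∈ A)
          = (M.filter (fun A => v ∈ A ∧ u ∈ A)).image (fun A => A.erase v) := by
        ext B
        simp only [hM', mem_filter, mem_image]
        constructor
        · rintro ⟨⟨A, hA, rfl⟩, huB⟩
          exact ⟨A, ⟨hA.1, hA.2, (erase_subset v A) huB⟩, rfl⟩
        · rintro ⟨A, ⟨hAM, hvA, huA⟩, rfl⟩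
          exact ⟨⟨A, ⟨hAM, hvA⟩, rfl⟩, mem_erase.mpr ⟨huv, huA⟩⟩
      have hinj2 : Set.InjOn (fun A : Finset α => A.erase v)
          ↑(M.filter (fun A => v ∈ A ∧ u ∈ A)) := by
        intro A hA B hB hAB
        simp only [coe_filter, Set.mem_setOf_eq] at hA hB
        exact hinj (by simp [hA.1, hA.2.1]) (by simp [hB.1, hB.2.1]) hAB
      have hcard : (M'.filter (fun A => u ∈ A)).card
          = (M.filter (fun A => v ∈ A ∧ u ∈ A)).card := by
        rw [himg, card_image_of_injOn hinj2]
      -- the strict inequality: some set contains u but not v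
      obtain ⟨B, hBM, hvB⟩ := hcon v hv
      have hBV : B ⊆ V := mem_powerset.mp (hMP hBM)
      have hB'M : insert u B ∈ M := by
        refine hup B hBM (insert u B) (mem_powerset.mpr (insert_subset huV hBV))
          (subset_insert _ _)
      have hssub : M.filter (fun A => v ∈ A ∧ u ∈ A) ⊂ M.filter (fun A => u ∈ A) := by
        constructor
        · exact filter_subset_filter _ (by intro A hA; exact hA) |>.trans
            (by intro A hA; simp only [mem_filter] at hA ⊢; exact ⟨hA.1, hA.2.2⟩)
        · intro hsub
          have h1 : insert u B ∈ M.filter (fun A => u ∈ A) :=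
            mem_filter.mpr ⟨hB'M, mem_insert_self _ _⟩
          have h2 := hsub h1
          have h3 := (mem_filter.mp h2).2.1
          rcases mem_insert.mp h3 with h | h
          · exact huv h.symm
          · exact hvB h
      have hlt : (M.filter (fun A => v ∈ A ∧ u ∈ A)).card
          < (M.filter (fun A => u ∈ A)).card := card_lt_card hssub
      have := hdeg u huV
      omega
    -- apply the induction hypothesis
    have hV'card : V'.card = n - 1 := by rw [hV', card_erase_of_mem hv, hVn]
    obtain ⟨u, huV', hucomm⟩ := ih (n - 1) (by omega) V' M' (c - 1) hV'card
      (by omega) hM'P hup' hM'ne hdeg'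
    -- u is in every member of M, contradicting hcon
    obtain ⟨A, hAM, huA⟩ := hcon u (mem_of_mem_erase huV')
    obtain ⟨huv, _⟩ := mem_erase.mp huV'
    rcases em (v ∈ A) with hvA | hvA
    · have : A.erase v ∈ M' := mem_image.mpr ⟨A, mem_filter.mpr ⟨hAM, hvA⟩, rfl⟩
      exact huA ((erase_subset v A) (hucomm _ this))
    · exact huA (hucomm A (hM0 A hAM hvA))

/-- The number of subsets of `V` containing a fixed element `v ∈ V` is `2 ^ (|V| - 1)`. -/
lemma card_powerset_filter_mem {α : Type*} [DecidableEq α] (V : Finset α) (v : α)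
    (hv : v ∈ V) :
    ((V.powerset).filter (fun A => v ∈ A)).card = 2 ^ (V.card - 1) := by
  have himg : (V.powerset).filter (fun A => v ∈ A)
      = (V.erase v).powerset.image (insert v) := by
    ext A
    simp only [mem_filter, mem_powerset, mem_image]
    constructor
    · rintro ⟨hAV, hvA⟩
      refine ⟨A.erase v, ?_, insert_erase hvA⟩
      exact erase_subset_erase v hAV
    · rintro ⟨B, hB, rfl⟩
      have hvB : v ∉ B := fun h => (notMem_erase v V) (hB h)
      exact ⟨insert_subset hv (hB.trans (erase_subset v V)), mem_insert_self _ _⟩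
  have hinj : Set.InjOn (fun A : Finset α => insert v A) ((V.erase v).powerset : Set (Finset α)) := by
    intro A hA B hB hAB
    rw [mem_coe, mem_powerset] at hA hB
    have hvA : v ∉ A := fun h => (notMem_erase v V) (hA h)
    have hvB : v ∉ B := fun h => (notMem_erase v V) (hB h)
    have h2 : ((fun A : Finset α => insert v A) A).erase v
        = ((fun A : Finset α => insert v A) B).erase v := congrArg (Finset.erase · v) hAB
    simp only [erase_insert hvA, erase_insert hvB] at h2
    exact h2
  rw [himg, card_image_of_injOn hinj, card_powerset, card_erase_of_mem hv]

/-- Lemma 3.2(2): if `d ≥ c + 1` and `𝓗` is a hereditary family on a `d`-set `V` with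
minimum degree at least `2^{d−1} − c`, then `|𝓗| ≥ 2^d − c`. -/
theorem local_lemma_min_degree {α : Type*} [DecidableEq α] (d c : ℕ)
    (hdc : c + 1 ≤ d) (V : Finset α) (hV : V.card = d)
    (𝓗 : Finset (Finset α)) (h𝓗 : 𝓗 ⊆ V.powerset) (hher : Hereditary 𝓗)
    (hdeg : ∀ v ∈ V, (2 : ℤ) ^ (d - 1) - c ≤ ((𝓗.filter fun H => v ∈ H).card : ℤ)) :
    (2 : ℤ) ^ d - c ≤ (𝓗.card : ℤ) := by
  classical
  set M := V.powerset \ 𝓗 with hM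
  have hMP : M ⊆ V.powerset := sdiff_subset
  have hcardsplit : M.card + 𝓗.card = 2 ^ d := by
    rw [hM, card_sdiff_of_subset h𝓗, card_powerset, hV]
    have : 𝓗.card ≤ 2 ^ d := by
      calc 𝓗.card ≤ V.powerset.card := card_le_card h𝓗
        _ = 2 ^ d := by rw [card_powerset, hV]
    omega
  -- upward closedness of M
  have hup : ∀ A ∈ M, ∀ B ∈ V.powerset, A ⊆ B → B ∈ M := by
    intro A hA B hB hAB
    obtain ⟨hAP, hA𝓗⟩ := mem_sdiff.mp hA
    refine mem_sdiff.mpr ⟨hB, fun hB𝓗 => hA𝓗 (hher B hB𝓗 A hAB)⟩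
  -- degree bound in M
  have hdegM : ∀ v ∈ V, (M.filter (fun A => v ∈ A)).card ≤ c := by
    intro v hv
    have hsplit : (M.filter (fun A => v ∈ A)).card + (𝓗.filter (fun A => v ∈ A)).card
        = 2 ^ (d - 1) := by
      have hdisj : Disjoint (M.filter (fun A => v ∈ A)) (𝓗.filter (fun A => v ∈ A)) := by
        refine disjoint_left.mpr ?_
        intro A hA hA'
        exact (mem_sdiff.mp (mem_filter.mp hA).1).2 (mem_filter.mp hA').1
      have hunion : (M.filter (fun A => v ∈ A)) ∪ (𝓗.filter (fun A => v ∈ A))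
          = (V.powerset).filter (fun A => v ∈ A) := by
        rw [← filter_union]
        congr 1
        rw [hM, sdiff_union_of_subset h𝓗]
      rw [← card_union_of_disjoint hdisj, hunion, card_powerset_filter_mem V v hv, hV]
    have h1 := hdeg v hv
    have hsplit' : ((M.filter (fun A => v ∈ A)).card : ℤ)
        + ((𝓗.filter (fun A => v ∈ A)).card : ℤ) = 2 ^ (d - 1) := by
      exact_mod_cast hsplit
    have h4 : ((M.filter (fun A => v ∈ A)).card : ℤ) ≤ c := by linarith
    exact_mod_cast h4
  rcases eq_or_ne M ∅ with hMe | hMne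
  · have : 𝓗.card = 2 ^ d := by
      rw [hMe] at hcardsplit; simpa using hcardsplit
    have h5 : (𝓗.card : ℤ) = 2 ^ d := by exact_mod_cast this
    have hc0 : (0 : ℤ) ≤ c := by positivity
    linarith
  · obtain ⟨u, huV, hucomm⟩ := exists_common_vertex d V M c hV hdc hMP hup
      (nonempty_iff_ne_empty.mpr hMne) hdegM
    have hMfull : M.filter (fun A => u ∈ A) = M := by
      apply filter_true_of_mem
      intro A hA; exact hucomm A hA
    have hMc : M.card ≤ c := by
      have := hdegM u huV
      rwa [hMfull] at this
    have hcs' : (M.card : ℤ) + (𝓗.card : ℤ) = 2 ^ d := by exact_mod_cast hcardsplit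
    have hMc' : (M.card : ℤ) ≤ c := by exact_mod_cast hMc
    linarith
end
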